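/- For n ≥ 1 and d ≥ 1, the kernel of the (d−1)-st power of the Laplacian restricted to homogeneous polynomials of degree 2d has dimension dim ker(Δ^{d−1}|_{V_{2d}^n}) = binom(n+2d−1, n−1) − binom(n+1, 2); equivalently, the linear map Δ^{d−1} : V_{2d}^n → V_2^n is surjective. -/

import Mathlib

open MvPolynomial Finsupp

/-- The Laplacian `Δ = ∑ i, ∂²/∂xᵢ²` as a linear endomorphism of `ℝ[x₁,…,xₙ]`. -/
noncomputable def lapLM (n : ℕ) :
    MvPolynomial (Fin n) ℝ →ₗ[ℝ] MvPolynomial (Fin n) ℝ :=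
  ∑ i, ((pderiv i).toLinearMap ∘ₗ (pderiv i).toLinearMap)

lemma lapLM_apply {n : ℕ} (p : MvPolynomial (Fin n) ℝ) :
    lapLM n p = ∑ k, pderiv k (pderiv k p) := by
  simp [lapLM]

lemma lap_monomial {n : ℕ} (t : Fin n →₀ ℕ) (r : ℝ) :
    lapLM n (monomial t r) =
      ∑ k, monomial (t - single k 1 - single k 1) (r * t k * (t k - 1 : ℕ)) := by
  rw [lapLM_apply]
  refine Finset.sum_congr rfl fun k _ => ?_
  rw [pderiv_monomial, pderiv_monomial, Finsupp.tsub_apply, Finsupp.single_eq_same]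

lemma lap_step {n : ℕ} (i j : Fin n) (a : ℕ) :
    ∃ c : ℝ, 0 < c ∧ lapLM n (monomial (single i (a + 2) + single j 1) 1)
      = c • monomial (single i a + single j 1) 1 := by
  set t : Fin n →₀ ℕ := single i (a + 2) + single j 1 with ht
  have hti : a + 2 ≤ t i := by
    rw [ht, Finsupp.add_apply, Finsupp.single_eq_same]; omega
  have hexp : t - single i 1 - single i 1 = single i a + single j 1 := by
    ext k
    simp only [Finsupp.tsub_apply, Finsupp.add_apply, Finsupp.single_apply, ht]
    split_ifs <;> omega
  refine ⟨(t i : ℝ) * ((t i - 1 : ℕ) : ℝ), ?_, ?_⟩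
  · have h1 : (0:ℕ) < t i := by omega
    have h2 : (0:ℕ) < t i - 1 := by omega
    exact mul_pos (by exact_mod_cast h1) (by exact_mod_cast h2)
  · rw [lap_monomial, Finset.sum_eq_single i ?_ ?_]
    · rw [smul_monomial, smul_eq_mul, mul_one, one_mul, hexp]
    · intro b _ hbi
      have htb : t b ≤ 1 := by
        rw [ht, Finsupp.add_apply, Finsupp.single_apply, Finsupp.single_apply]
        split_ifs <;> omega
      have h0 : t b - 1 = 0 := by omega
      rw [h0]
      simp
    · intro h; exact absurd (Finset.mem_univ i) h

lemma lap_pow {n : ℕ} (i j : Fin n) (e : ℕ) :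
    ∃ c : ℝ, 0 < c ∧ (lapLM n ^ e) (monomial (single i (2 * e + 1) + single j 1) 1)
      = c • monomial (single i 1 + single j 1) 1 := by
  induction e with
  | zero => exact ⟨1, one_pos, by simp⟩
  | succ e ih =>
    obtain ⟨c, hc, hce⟩ := ih
    obtain ⟨c', hc', hstep⟩ := lap_step i j (2 * e + 1)
    refine ⟨c' * c, mul_pos hc' hc, ?_⟩
    have h1 : 2 * (e + 1) + 1 = 2 * e + 1 + 2 := by ring
    rw [h1, pow_succ, Module.End.mul_apply, hstep, map_smul, hce, smul_smul]

lemma degree_card {α : Type*} (f : α →₀ ℕ) :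
    f.degree = Multiset.card (Finsupp.toMultiset f) := by
  rw [Finsupp.card_toMultiset]; rfl

lemma degree_add'' {α : Type*} (a b : α →₀ ℕ) : (a + b).degree = a.degree + b.degree := by
  simp [degree_card, Finsupp.toMultiset_add]

lemma degree_single'' {α : Type*} (i : α) (k : ℕ) : (single i k).degree = k := by
  simp [degree_card, Finsupp.toMultiset_single]

lemma isHomog_coeff {n m : ℕ} {p : MvPolynomial (Fin n) ℝ} (hp : p.IsHomogeneous m)
    {t : Fin n →₀ ℕ} (ht : coeff t p ≠ 0) : t.degree = m := by
  by_contra h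
  exact ht (hp.coeff_eq_zero h)

lemma pderiv_isHomog {n m : ℕ} (i : Fin n) {p : MvPolynomial (Fin n) ℝ}
    (hp : p.IsHomogeneous (m + 1)) : (pderiv i p).IsHomogeneous m := by
  rw [← mem_homogeneousSubmodule]
  have h : pderiv i p = ∑ t ∈ p.support, pderiv i (monomial t (coeff t p)) := by
    conv_lhs => rw [p.as_sum]
    rw [map_sum]
  rw [h]
  refine Submodule.sum_mem _ fun t htm => ?_
  rw [pderiv_monomial]
  rcases Nat.eq_zero_or_pos (t i) with h0 | h0
  · rw [h0]
    simp
  · refine isHomogeneous_monomial _ ?_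
    have hdt : t.degree = m + 1 := isHomog_coeff hp (MvPolynomial.mem_support_iff.mp htm)
    have hle : single i 1 ≤ t := Finsupp.single_le_iff.mpr h0
    have hadd : (t - single i 1) + single i 1 = t := tsub_add_cancel_of_le hle
    have := congrArg Finsupp.degree hadd
    rw [degree_add'', degree_single''] at this
    omega

lemma lap_isHomog {n : ℕ} (e : ℕ) : ∀ (m : ℕ) (p : MvPolynomial (Fin n) ℝ),
    p.IsHomogeneous (m + 2 * e) → ((lapLM n ^ e) p).IsHomogeneous m := by
  induction e with
  | zero => intro m p hp; simpa using hp
  | succ e ih =>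
    intro m p hp
    rw [pow_succ, Module.End.mul_apply]
    refine ih m _ ?_
    rw [← mem_homogeneousSubmodule, lapLM_apply]
    refine Submodule.sum_mem _ fun k _ => ?_
    rw [mem_homogeneousSubmodule]
    refine pderiv_isHomog k (pderiv_isHomog k ?_)
    have : m + 2 * e + 1 + 1 = m + 2 * (e + 1) := by ring
    rw [this]
    exact hp

lemma deg2 {n : ℕ} (s : Fin n →₀ ℕ) (hs : s.degree = 2) :
    ∃ i j : Fin n, s = single i 1 + single j 1 := by
  have hcard : Multiset.card (Finsupp.toMultiset s) = 2 := by rw [← degree_card, hs]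
  obtain ⟨i, j, hij⟩ := Multiset.card_eq_two.mp hcard
  refine ⟨i, j, ?_⟩
  have h2 := congrArg Multiset.toFinsupp hij
  rw [Finsupp.toMultiset_toFinsupp] at h2
  rw [h2]
  rw [Multiset.insert_eq_cons, ← Multiset.singleton_add, map_add,
    Multiset.toFinsupp_singleton, Multiset.toFinsupp_singleton]

noncomputable def degEquiv (n k : ℕ) :
    {d : Fin n →₀ ℕ // Finsupp.degree d = k} ≃ Sym (Fin n) k :=
  ((Equiv.refl (Fin n →₀ ℕ)).subtypeEquiv (by
    intro d
    simp [Finsupp.degree, Finsupp.sum]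
    exact Iff.rfl)).trans (Sym.equivNatSum (Fin n) k).symm

noncomputable instance instFt (n k : ℕ) : Fintype {d : Fin n →₀ ℕ // Finsupp.degree d = k} :=
  Fintype.ofEquiv _ (degEquiv n k).symm

lemma card_deg (n k : ℕ) :
    Fintype.card {d : Fin n →₀ ℕ // Finsupp.degree d = k} = (n + k - 1).choose k := by
  rw [Fintype.card_congr (degEquiv n k), Sym.card_sym_eq_multichoose, Nat.multichoose_eq,
    Fintype.card_fin]

noncomputable def homogEquiv (n k : ℕ) :
    homogeneousSubmodule (Fin n) ℝ k ≃ₗ[ℝ] ({d : Fin n →₀ ℕ // Finsupp.degree d = k} →₀ ℝ) :=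
  (LinearEquiv.ofEq _ _ (homogeneousSubmodule_eq_finsupp_supported (Fin n) ℝ k)).trans
    (AddMonoidAlgebra.supportedEquivFinsupp _)

instance (n k : ℕ) : Module.Finite ℝ (homogeneousSubmodule (Fin n) ℝ k) :=
  Module.Finite.equiv (homogEquiv n k).symm

lemma finrank_homog (n k : ℕ) :
    Module.finrank ℝ (homogeneousSubmodule (Fin n) ℝ k) = (n + k - 1).choose k := by
  rw [(homogEquiv n k).finrank_eq, Module.finrank_finsupp_self, card_deg]

lemma surj_monomial {n d : ℕ} (hd : 1 ≤ d) (s : Fin n →₀ ℕ) (hs : s.degree = 2) :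
    ∃ p ∈ homogeneousSubmodule (Fin n) ℝ (2 * d), (lapLM n ^ (d - 1)) p = monomial s 1 := by
  obtain ⟨i, j, rfl⟩ := deg2 s hs
  obtain ⟨c, hc, hce⟩ := lap_pow i j (d - 1)
  refine ⟨c⁻¹ • monomial (single i (2 * (d - 1) + 1) + single j 1) 1, ?_, ?_⟩
  · refine Submodule.smul_mem _ _ ?_
    rw [mem_homogeneousSubmodule]
    refine isHomogeneous_monomial _ ?_
    rw [degree_add'', degree_single'', degree_single'']
    omega
  · rw [map_smul, hce, smul_smul, inv_mul_cancel₀ hc.ne', one_smul]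

lemma surj_all {n d : ℕ} (hd : 1 ≤ d) (q : MvPolynomial (Fin n) ℝ)
    (hq : q ∈ homogeneousSubmodule (Fin n) ℝ 2) :
    ∃ p ∈ homogeneousSubmodule (Fin n) ℝ (2 * d), (lapLM n ^ (d - 1)) p = q := by
  have key : ∀ s ∈ q.support, ∃ p, p ∈ homogeneousSubmodule (Fin n) ℝ (2 * d) ∧
      (lapLM n ^ (d - 1)) p = monomial s 1 := by
    intro s hsm
    simpa using surj_monomial (n := n) hd s
      (isHomog_coeff hq (MvPolynomial.mem_support_iff.mp hsm))
  choose f hmem hmap using key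
  refine ⟨∑ s ∈ q.support.attach, coeff s.1 q • f s.1 s.2,
    Submodule.sum_mem _ fun s _ => Submodule.smul_mem _ _ (hmem s.1 s.2), ?_⟩
  rw [map_sum]
  have h1 : ∀ s ∈ q.support.attach,
      (lapLM n ^ (d - 1)) (coeff s.1 q • f s.1 s.2) = monomial s.1 (coeff s.1 q) := by
    intro s _
    rw [map_smul, hmap s.1 s.2, smul_monomial, smul_eq_mul, mul_one]
  rw [Finset.sum_congr rfl h1, Finset.sum_attach q.support fun s => monomial s (coeff s q)]
  exact q.as_sum.symm

/-- **Statement 9.** For `n, d ≥ 1`, the kernel of `Δ^{d−1}` restricted to the space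
`V_{2d}ⁿ` of homogeneous polynomials of degree `2d` has dimension
`binom(n+2d−1, n−1) − binom(n+1, 2)`; equivalently, `Δ^{d−1} : V_{2d}ⁿ → V_2ⁿ`
is surjective. -/
theorem stmt9 {n d : ℕ} (hn : 1 ≤ n) (hd : 1 ≤ d) :
    Module.finrank ℝ
        (LinearMap.ker ((lapLM n ^ (d - 1)).domRestrict
          (homogeneousSubmodule (Fin n) ℝ (2 * d)))) =
      Nat.choose (n + 2 * d - 1) (n - 1) - Nat.choose (n + 1) 2 ∧
    ∀ q ∈ homogeneousSubmodule (Fin n) ℝ 2,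
      ∃ p ∈ homogeneousSubmodule (Fin n) ℝ (2 * d), (lapLM n ^ (d - 1)) p = q := by
  have hsurj : ∀ q ∈ homogeneousSubmodule (Fin n) ℝ 2,
      ∃ p ∈ homogeneousSubmodule (Fin n) ℝ (2 * d), (lapLM n ^ (d - 1)) p = q :=
    fun q hq => surj_all hd q hq
  refine ⟨?_, hsurj⟩
  set L := (lapLM n ^ (d - 1)).domRestrict (homogeneousSubmodule (Fin n) ℝ (2 * d)) with hL
  have hrange : LinearMap.range L = homogeneousSubmodule (Fin n) ℝ 2 := by
    apply le_antisymm
    · rintro x ⟨⟨p, hp⟩, rfl⟩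
      rw [hL, LinearMap.domRestrict_apply, mem_homogeneousSubmodule]
      refine lap_isHomog (d - 1) 2 p ?_
      rw [show 2 + 2 * (d - 1) = 2 * d by omega]
      exact hp
    · intro q hq
      obtain ⟨p, hp, hpq⟩ := hsurj q hq
      exact ⟨⟨p, hp⟩, hpq⟩
  have hrn := LinearMap.finrank_range_add_finrank_ker L
  rw [hrange] at hrn
  rw [finrank_homog n 2, finrank_homog n (2 * d)] at hrn
  have h2 : (n + 2 - 1).choose 2 = (n + 1).choose 2 := by congr 1
  have hsymm : (n + 2 * d - 1).choose (n - 1) = (n + 2 * d - 1).choose (2 * d) := by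
    rw [← Nat.choose_symm (show n - 1 ≤ n + 2 * d - 1 by omega)]
    congr 1
    omega
  rw [hsymm]
  omega
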